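/- Let the bivariate GL distribution have μ = 0, Σ = [[1, ρ'],[ρ', 1]] with |ρ'| < 1, and density generator g₂(t) = t^{N-1} e^{-at}/(1 + e^{-bt})^{2r} (s = 1). Then Cov(X,Y) = (N/(2b)) · Φ*_{2r}(-1, N+1, a/b)/Φ*_{2r}(-1, N, a/b) · ρ'. -/

import Mathlib

open MeasureTheory Real Set Matrix

/-- Generalized Hurwitz-Lerch zeta function, integral representation. -/
noncomputable def PhiInt (v z s a : ℝ) : ℝ :=
  (1 / Real.Gamma s) *
    ∫ t in Ioi (0:ℝ), t ^ (s - 1) * Real.exp (-a * t) / (1 - z * Real.exp (-t)) ^ v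

lemma gl_linear_cov (α β : ℝ) (hα : 0 < α) (hβ : 0 < β) (G : ℝ × ℝ → ℝ) :
    ∫ z : ℝ × ℝ, G z
      = (2*α*β) * ∫ z : ℝ × ℝ, G (α*z.1 + β*z.2, α*z.1 - β*z.2) := by
  set T : ℝ × ℝ →L[ℝ] ℝ × ℝ :=
    LinearMap.toContinuousLinearMap
      (Matrix.toLin (Module.Basis.finTwoProd ℝ) (Module.Basis.finTwoProd ℝ) !![α, β; α, -β]) with hT
  have hTapp : ∀ z : ℝ × ℝ, T z = (α*z.1 + β*z.2, α*z.1 - β*z.2) := by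
    intro z
    simp only [hT, LinearMap.coe_toContinuousLinearMap', Matrix.toLin_finTwoProd_apply]
    norm_num
    ring
  have hdet : T.det = -(2*α*β) := by
    have : T.det = LinearMap.det
        (Matrix.toLin (Module.Basis.finTwoProd ℝ) (Module.Basis.finTwoProd ℝ) !![α, β; α, -β]) := rfl
    rw [this, LinearMap.det_toLin, Matrix.det_fin_two_of]
    ring
  have hinj : Set.InjOn T (univ : Set (ℝ × ℝ)) := by
    intro u _ v _ h
    rw [hTapp, hTapp, Prod.mk.injEq] at h
    obtain ⟨h1, h2⟩ := h
    have e1 : u.1 = v.1 := by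
      have : 2*α*u.1 = 2*α*v.1 := by linarith
      exact mul_left_cancel₀ (by positivity) this
    have e2 : u.2 = v.2 := by
      have : 2*β*u.2 = 2*β*v.2 := by linarith
      exact mul_left_cancel₀ (by positivity) this
    exact Prod.ext e1 e2
  have himg : T '' (univ : Set (ℝ × ℝ)) = univ := by
    apply Set.eq_univ_of_forall
    rintro ⟨u, v⟩
    refine ⟨((u+v)/(2*α), (u-v)/(2*β)), trivial, ?_⟩
    rw [hTapp]
    apply Prod.ext <;> (simp only []; field_simp; ring)
  have key := integral_image_eq_integral_abs_det_fderiv_smul (μ := volume)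
      MeasurableSet.univ (f := fun z => T z) (f' := fun _ => T)
      (fun x _ => T.hasFDerivAt.hasFDerivWithinAt) hinj G
  rw [himg, setIntegral_univ, setIntegral_univ] at key
  rw [key, hdet]
  simp only [abs_neg, abs_of_pos (by positivity : (0:ℝ) < 2*α*β), smul_eq_mul]
  rw [MeasureTheory.integral_const_mul]
  congr 1
  apply integral_congr_ae
  filter_upwards with z
  rw [hTapp]

lemma gl_polar_split (K : ℝ × ℝ → ℝ) (φ ψ : ℝ → ℝ)
    (hK : ∀ r θ : ℝ, 0 < r → r * K (r * Real.cos θ, r * Real.sin θ) = φ r * ψ θ) :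
    ∫ z : ℝ × ℝ, K z
      = (∫ r in Ioi (0:ℝ), φ r) * ∫ θ in Ioo (-π) π, ψ θ := by
  rw [← integral_comp_polarCoord_symm K]
  have htarget : polarCoord.target = Ioi (0:ℝ) ×ˢ Ioo (-π) π := rfl
  have hsymm : ∀ p : ℝ × ℝ, polarCoord.symm p = (p.1 * Real.cos p.2, p.1 * Real.sin p.2) :=
    fun p => rfl
  rw [htarget, MeasureTheory.Measure.volume_eq_prod, ← setIntegral_prod_mul φ ψ]
  apply setIntegral_congr_fun (measurableSet_Ioi.prod measurableSet_Ioo)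
  rintro ⟨r, θ⟩ ⟨hr, -⟩
  simp only [smul_eq_mul, hsymm]
  exact hK r θ hr

lemma gl_radial_sub (G : ℝ → ℝ) :
    ∫ r in Ioi (0:ℝ), r * G (r ^ 2) = (1/2) * ∫ t in Ioi (0:ℝ), G t := by
  have h := integral_comp_rpow_Ioi (fun t => G t) (p := 2) two_ne_zero
  rw [← h, ← MeasureTheory.integral_const_mul]
  apply setIntegral_congr_fun measurableSet_Ioi
  intro x hx
  simp only [smul_eq_mul]
  rw [show (2:ℝ) - 1 = 1 by norm_num, Real.rpow_one,
    show x ^ (2:ℝ) = x ^ (2:ℕ) by rw [← Real.rpow_natCast x 2]; norm_num]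
  norm_num
  ring

lemma gl_radial_sub3 (G : ℝ → ℝ) :
    ∫ r in Ioi (0:ℝ), r ^ 3 * G (r ^ 2) = (1/2) * ∫ t in Ioi (0:ℝ), t * G t := by
  have h := integral_comp_rpow_Ioi (fun t => t * G t) (p := 2) two_ne_zero
  rw [← h, ← MeasureTheory.integral_const_mul]
  apply setIntegral_congr_fun measurableSet_Ioi
  intro x hx
  simp only [smul_eq_mul]
  rw [show (2:ℝ) - 1 = 1 by norm_num, Real.rpow_one,
    show x ^ (2:ℝ) = x ^ (2:ℕ) by rw [← Real.rpow_natCast x 2]; norm_num]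
  norm_num
  ring

lemma gl_scale_phi (s a b r : ℝ) (hs : 0 < s) (hb : 0 < b) :
    ∫ t in Ioi (0:ℝ), t ^ (s - 1) * Real.exp (-a * t) / (1 + Real.exp (-b * t)) ^ (2*r)
      = b ^ (-s) * (Real.Gamma s * PhiInt (2*r) (-1) s (a/b)) := by
  set G : ℝ → ℝ := fun u => u ^ (s - 1) * Real.exp (-(a/b) * u) / (1 + Real.exp (-u)) ^ (2*r)
    with hG
  have key := integral_comp_mul_left_Ioi G 0 hb
  rw [mul_zero] at key
  have h1 : ∫ x in Ioi (0:ℝ), G (b * x)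
      = b ^ (s-1) * ∫ t in Ioi (0:ℝ),
          t ^ (s - 1) * Real.exp (-a * t) / (1 + Real.exp (-b * t)) ^ (2*r) := by
    rw [← MeasureTheory.integral_const_mul]
    apply setIntegral_congr_fun measurableSet_Ioi
    intro x hx
    have hx0 : (0:ℝ) ≤ x := le_of_lt hx
    simp only [hG]
    rw [Real.mul_rpow hb.le hx0]
    rw [show -(a/b) * (b*x) = -a * x by field_simp, show -(b*x) = -b*x by ring]
    ring
  have h2 : Real.Gamma s * PhiInt (2*r) (-1) s (a/b) = ∫ x in Ioi (0:ℝ), G x := by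
    rw [PhiInt]
    have hΓ : Real.Gamma s ≠ 0 := (Real.Gamma_pos_of_pos hs).ne'
    rw [← mul_assoc, mul_one_div, div_self hΓ, one_mul]
    apply setIntegral_congr_fun measurableSet_Ioi
    intro x hx
    simp only [hG]
    norm_num
  rw [h1, smul_eq_mul] at key
  have hpow : b ^ (s-1) ≠ 0 := (Real.rpow_pos_of_pos hb _).ne'
  have hbs : b ^ (-s) = (b ^ (s-1))⁻¹ * b⁻¹ := by
    rw [← Real.rpow_neg_one b, ← Real.rpow_neg hb.le, ← Real.rpow_add hb]
    ring_nf
  rw [h2, hbs]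
  have : (∫ t in Ioi (0:ℝ), t ^ (s - 1) * Real.exp (-a * t) / (1 + Real.exp (-b * t)) ^ (2*r))
      = (b ^ (s-1))⁻¹ * (b⁻¹ * ∫ x in Ioi (0:ℝ), G x) := by
    rw [← key]; field_simp
    congr 1; ext t; ring_nf
  rw [this]; ring

lemma gl_fin_two_transfer (H : (Fin 2 → ℝ) → ℝ) :
    ∫ x : Fin 2 → ℝ, H x = ∫ z : ℝ × ℝ, H ![z.1, z.2] := by
  have h := ((volume_preserving_finTwoArrow ℝ).symm).integral_comp
    (MeasurableEquiv.finTwoArrow.symm).measurableEmbedding H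
  rw [← h]
  apply integral_congr_ae
  filter_upwards with z
  congr 1

lemma gl_ang_const : ∫ θ in Ioo (-π) π, (1:ℝ) = 2*π := by
  simp [Real.volume_Ioo]
  ring_nf
  rw [max_eq_left (by positivity)]

lemma gl_ang_quad (ρ : ℝ) :
    ∫ θ in Ioo (-π) π, ((1+ρ)*Real.cos θ^2 - (1-ρ)*Real.sin θ^2)/2 = ρ*π := by
  rw [← integral_Ioc_eq_integral_Ioo,
    ← intervalIntegral.integral_of_le (by linarith [Real.pi_pos] : -π ≤ π)]
  have hc : IntervalIntegrable (fun θ : ℝ => (1+ρ)*Real.cos θ^2/2) volume (-π) π := by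
    apply Continuous.intervalIntegrable; continuity
  have hs : IntervalIntegrable (fun θ : ℝ => (1-ρ)*Real.sin θ^2/2) volume (-π) π := by
    apply Continuous.intervalIntegrable; continuity
  have : (fun θ : ℝ => ((1+ρ)*Real.cos θ^2 - (1-ρ)*Real.sin θ^2)/2)
      = fun θ : ℝ => (1+ρ)*Real.cos θ^2/2 - (1-ρ)*Real.sin θ^2/2 := by
    ext θ; ring
  rw [this, intervalIntegral.integral_sub hc hs]
  have e1 : ∫ θ in (-π)..π, (1+ρ)*Real.cos θ^2/2 = (1+ρ)/2 * ∫ θ in (-π)..π, Real.cos θ^2 := by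
    rw [← intervalIntegral.integral_const_mul]; congr 1; ext θ; ring
  have e2 : ∫ θ in (-π)..π, (1-ρ)*Real.sin θ^2/2 = (1-ρ)/2 * ∫ θ in (-π)..π, Real.sin θ^2 := by
    rw [← intervalIntegral.integral_const_mul]; congr 1; ext θ; ring
  rw [e1, e2, integral_cos_sq, integral_sin_sq]
  simp [Real.sin_pi, Real.cos_pi]
  ring

/-- Covariance of the bivariate GL distribution with μ = 0, Σ = [[1, ρ],[ρ, 1]] and
density generator g₂(t) = t^{N-1} e^{-at}/(1+e^{-bt})^{2r}. -/
theorem gl_bivariate_covariance (N a b r C₂ ρ : ℝ)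
    (hN : 1 ≤ N) (ha : 0 < a) (hb : 0 < b) (hr : 0 ≤ r) (hρ : |ρ| < 1)
    (S : Matrix (Fin 2) (Fin 2) ℝ) (hSdef : S = !![1, ρ; ρ, 1])
    (f : (Fin 2 → ℝ) → ℝ)
    (hf : f = fun x => C₂ / Real.sqrt S.det *
      ((dotProduct x (S⁻¹.mulVec x)) ^ (N - 1) *
        Real.exp (-a * dotProduct x (S⁻¹.mulVec x)) /
        (1 + Real.exp (-b * dotProduct x (S⁻¹.mulVec x))) ^ (2 * r)))
    (hnorm : ∫ x : Fin 2 → ℝ, f x = 1) :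
    ∫ x : Fin 2 → ℝ, f x * (x 0 * x 1)
      = N / (2 * b) *
          (PhiInt (2 * r) (-1) (N + 1) (a / b) / PhiInt (2 * r) (-1) N (a / b)) * ρ := by
  obtain ⟨hρ1, hρ2⟩ := abs_lt.mp hρ
  have hN0 : (0:ℝ) < N := by linarith
  have h1ρ : (0:ℝ) < 1 - ρ^2 := by nlinarith
  have hπ := Real.pi_pos
  -- the density generator
  set g : ℝ → ℝ := fun t => t ^ (N - 1) * Real.exp (-a * t) / (1 + Real.exp (-b * t)) ^ (2*r)
    with hg
  -- basic matrix facts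
  have hdetS : S.det = 1 - ρ^2 := by rw [hSdef, Matrix.det_fin_two_of]; ring
  have hSinv : S⁻¹ = (1-ρ^2)⁻¹ • !![1,-ρ;-ρ,1] := by
    apply Matrix.inv_eq_right_inv
    ext i j
    fin_cases i <;> fin_cases j <;>
      simp [hSdef, Matrix.mul_apply, Fin.sum_univ_two, Matrix.one_apply] <;>
      (field_simp; try ring)
  have hQ : ∀ x : Fin 2 → ℝ, dotProduct x (S⁻¹.mulVec x)
      = (x 0^2 - 2*ρ*(x 0)*(x 1) + (x 1)^2) / (1-ρ^2) := by
    intro x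
    rw [hSinv]
    simp [dotProduct, Matrix.mulVec, Fin.sum_univ_two]
    field_simp
    ring
  -- the density as a function on ℝ × ℝ
  have hfz : ∀ z : ℝ × ℝ, f ![z.1, z.2]
      = C₂ / Real.sqrt (1-ρ^2) * g ((z.1^2 - 2*ρ*z.1*z.2 + z.2^2) / (1-ρ^2)) := by
    intro z
    rw [hf]
    simp only [hdetS, hg]
    rw [hQ ![z.1, z.2]]
    simp
  -- the linear change of variables
  set α : ℝ := Real.sqrt ((1+ρ)/2) with hαdef
  set β : ℝ := Real.sqrt ((1-ρ)/2) with hβdef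
  have hα : 0 < α := Real.sqrt_pos.mpr (by linarith)
  have hβ : 0 < β := Real.sqrt_pos.mpr (by linarith)
  have hα2 : α^2 = (1+ρ)/2 := Real.sq_sqrt (by linarith)
  have hβ2 : β^2 = (1-ρ)/2 := Real.sq_sqrt (by linarith)
  have h2αβ : 2*α*β = Real.sqrt (1-ρ^2) := by
    have h1 : (2*α*β)^2 = 1-ρ^2 := by nlinarith [hα2, hβ2]
    rw [← h1, Real.sqrt_sq (by positivity)]
  have hsq : Real.sqrt (1-ρ^2) ≠ 0 := by positivity
  have hQT : ∀ p q : ℝ,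
      ((α*p+β*q)^2 - 2*ρ*(α*p+β*q)*(α*p-β*q) + (α*p-β*q)^2)/(1-ρ^2) = p^2+q^2 := by
    intro p q
    rw [div_eq_iff h1ρ.ne']
    linear_combination (2*p^2 - 2*ρ*p^2) * hα2 + (2*q^2 + 2*ρ*q^2) * hβ2
  have hprod : ∀ p q : ℝ,
      (α*p+β*q)*(α*p-β*q) = ((1+ρ)*p^2 - (1-ρ)*q^2)/2 := by
    intro p q
    linear_combination p^2 * hα2 - q^2 * hβ2
  -- radial integrals
  have hrad1 : ∫ t in Ioi (0:ℝ), g t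
      = b ^ (-N) * (Real.Gamma N * PhiInt (2*r) (-1) N (a/b)) := by
    rw [hg]
    exact gl_scale_phi N a b r hN0 hb
  have hrad2 : ∫ t in Ioi (0:ℝ), t * g t
      = b ^ (-(N+1)) * (Real.Gamma (N+1) * PhiInt (2*r) (-1) (N+1) (a/b)) := by
    rw [← gl_scale_phi (N+1) a b r (by linarith) hb]
    apply setIntegral_congr_fun measurableSet_Ioi
    intro x hx
    simp only [hg]
    rw [show N + 1 - 1 = 1 + (N-1) by ring, Real.rpow_add hx, Real.rpow_one]
    ring
  -- computation of the normalization integral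
  have hnorm2 : ∫ x : Fin 2 → ℝ, f x
      = C₂ * π * (b ^ (-N) * (Real.Gamma N * PhiInt (2*r) (-1) N (a/b))) := by
    rw [gl_fin_two_transfer f]
    have e1 : ∫ z : ℝ × ℝ, f ![z.1, z.2]
        = ∫ z : ℝ × ℝ, C₂ / Real.sqrt (1-ρ^2) *
            g ((z.1^2 - 2*ρ*z.1*z.2 + z.2^2) / (1-ρ^2)) := by
      apply integral_congr_ae; filter_upwards with z; rw [hfz z]
    rw [e1, gl_linear_cov α β hα hβ]
    have e2 : ∫ z : ℝ × ℝ, C₂ / Real.sqrt (1-ρ^2) *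
        g ((((α*z.1+β*z.2))^2 - 2*ρ*(α*z.1+β*z.2)*(α*z.1-β*z.2) + (α*z.1-β*z.2)^2) / (1-ρ^2))
        = C₂ / Real.sqrt (1-ρ^2) * ∫ z : ℝ × ℝ, g (z.1^2 + z.2^2) := by
      rw [← MeasureTheory.integral_const_mul]
      apply integral_congr_ae; filter_upwards with z
      rw [hQT z.1 z.2]
    rw [e2, gl_polar_split (fun z => g (z.1^2+z.2^2)) (fun r' => r' * g (r'^2)) (fun _ => 1)
      (by intro r' θ hr'
          simp only []
          rw [show (r' * Real.cos θ)^2 + (r' * Real.sin θ)^2 = r'^2 by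
            rw [mul_pow, mul_pow, ← mul_add, add_comm ((Real.cos θ)^2), Real.sin_sq_add_cos_sq,
              mul_one]]
          ring)]
    rw [gl_ang_const, gl_radial_sub g, hrad1, h2αβ]
    field_simp
  -- computation of the covariance integral
  have hcov : ∫ x : Fin 2 → ℝ, f x * (x 0 * x 1)
      = C₂ * π * ρ / 2 *
          (b ^ (-(N+1)) * (Real.Gamma (N+1) * PhiInt (2*r) (-1) (N+1) (a/b))) := by
    rw [gl_fin_two_transfer (fun x => f x * (x 0 * x 1))]
    have e1 : ∫ z : ℝ × ℝ, f ![z.1, z.2] * (![z.1, z.2] 0 * ![z.1, z.2] 1)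
        = ∫ z : ℝ × ℝ, C₂ / Real.sqrt (1-ρ^2) *
            (g ((z.1^2 - 2*ρ*z.1*z.2 + z.2^2) / (1-ρ^2)) * (z.1 * z.2)) := by
      apply integral_congr_ae; filter_upwards with z
      rw [hfz z]
      simp
      ring
    rw [e1, gl_linear_cov α β hα hβ]
    have e2 : ∫ z : ℝ × ℝ, C₂ / Real.sqrt (1-ρ^2) *
        (g ((((α*z.1+β*z.2))^2 - 2*ρ*(α*z.1+β*z.2)*(α*z.1-β*z.2) + (α*z.1-β*z.2)^2) / (1-ρ^2))
          * ((α*z.1+β*z.2) * (α*z.1-β*z.2)))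
        = C₂ / Real.sqrt (1-ρ^2) *
            ∫ z : ℝ × ℝ, g (z.1^2 + z.2^2) * (((1+ρ)*z.1^2 - (1-ρ)*z.2^2)/2) := by
      rw [← MeasureTheory.integral_const_mul]
      apply integral_congr_ae; filter_upwards with z
      rw [hQT z.1 z.2, hprod z.1 z.2]
    rw [e2, gl_polar_split (fun z => g (z.1^2+z.2^2) * (((1+ρ)*z.1^2 - (1-ρ)*z.2^2)/2))
      (fun r' => r'^3 * g (r'^2))
      (fun θ => ((1+ρ)*Real.cos θ^2 - (1-ρ)*Real.sin θ^2)/2)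
      (by intro r' θ hr'
          simp only []
          rw [show (r' * Real.cos θ)^2 + (r' * Real.sin θ)^2 = r'^2 by
            rw [mul_pow, mul_pow, ← mul_add, add_comm ((Real.cos θ)^2), Real.sin_sq_add_cos_sq,
              mul_one]]
          ring)]
    rw [gl_ang_quad ρ, gl_radial_sub3 g, hrad2, h2αβ]
    field_simp
  -- final algebra
  rw [hnorm2] at hnorm
  rw [hcov]
  have hΓ : Real.Gamma N ≠ 0 := (Real.Gamma_pos_of_pos hN0).ne'
  have hΓ1 : Real.Gamma (N+1) = N * Real.Gamma N := Real.Gamma_add_one hN0.ne'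
  have hbN : b ^ (-(N+1)) = b ^ (-N) * b⁻¹ := by
    rw [← Real.rpow_neg_one b, ← Real.rpow_add hb]
    ring_nf
  have hbNpos : (0:ℝ) < b ^ (-N) := Real.rpow_pos_of_pos hb _
  have hPne : PhiInt (2*r) (-1) N (a/b) ≠ 0 := by
    intro h
    rw [h] at hnorm
    simp at hnorm
  rw [hΓ1, hbN]
  field_simp
  linear_combination (ρ * PhiInt (2*r) (-1) (N+1) (a/b)) * hnorm
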